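/- For every natural number n ≥ 2, there exist pairwise distinct elements a₁, a₂, …, aₙ of Q such that a₁ • a₂ = a₂ • a₃ = ⋯ = a_{n−1} • aₙ; that is, there exist an injective function f from {1,…,n} to Q and an element l ∈ Q with f(j) • f(j+1) = l for every j with 1 ≤ j ≤ n−1. -/

import Mathlib

/-- A natural number is an SP number if it is a prime times a square `k^2` with `k ≥ 2`. -/
def IsSP (n : ℕ) : Prop := ∃ p k : ℕ, p.Prime ∧ 2 ≤ k ∧ n = p * k ^ 2

/-- `Qset` consists of `1` together with all SP numbers. -/
def Qset : Set ℕ := {n | n = 1 ∨ IsSP n}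

/-- `N x` is the smallest element of `Qset` strictly greater than `x`. -/
noncomputable def N (x : ℕ) : ℕ := sInf {y : ℕ | y ∈ Qset ∧ x < y}

/-- The loop operation: `dot a b = N (|a - b|)`. -/
noncomputable def dot (a b : ℕ) : ℕ := N ((a : ℤ) - (b : ℤ)).natAbs

/-- `2 * a ^ 2` is in `Qset` whenever `a ≥ 2`. -/
lemma two_mul_sq_mem_Qset {a : ℕ} (ha : 2 ≤ a) : 2 * a ^ 2 ∈ Qset :=
  Or.inr ⟨2, a, Nat.prime_two, ha, rfl⟩

/-- `N x` is in `Qset` and exceeds `x`. -/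
lemma N_spec (x : ℕ) : N x ∈ Qset ∧ x < N x := by
  have hne : {y : ℕ | y ∈ Qset ∧ x < y}.Nonempty := by
    refine ⟨2 * (x + 2) ^ 2, two_mul_sq_mem_Qset (by omega), ?_⟩
    nlinarith
  exact Nat.sInf_mem hne

/-- If two distinct primes each divide `X` but their squares do not, `X` is not SP. -/
lemma not_isSP_of_pair {X r s : ℕ} (hr : r.Prime) (hs : s.Prime) (hrs : r ≠ s)
    (hrX : r ∣ X) (hr2 : ¬ r ^ 2 ∣ X) (hsX : s ∣ X) (hs2 : ¬ s ^ 2 ∣ X) : ¬ IsSP X := by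
  rintro ⟨p, k, hp, hk, rfl⟩
  have key : ∀ q : ℕ, q.Prime → q ≠ p → q ∣ p * k ^ 2 → q ^ 2 ∣ p * k ^ 2 := by
    intro q hq hqp hdvd
    rcases (Nat.Prime.dvd_mul hq).mp hdvd with h | h
    · exact absurd ((Nat.prime_dvd_prime_iff_eq hq hp).mp h) hqp
    · exact Dvd.dvd.mul_left (pow_dvd_pow_of_dvd (hq.dvd_of_dvd_pow h) 2) p
  by_cases hrp : r = p
  · exact hs2 (key s hs (fun h => hrs (hrp.trans h.symm)) hsX)
  · exact hr2 (key r hr hrp hrX)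

/-- Key CRT lemma: there are `Y, M` with `4 ∣ Y`, `4 ∣ M` such that every shift
`Y + c*M + t` with `1 ≤ t ≤ m` fails to be SP. -/
lemma key_crt (m : ℕ) : ∃ Y M : ℕ, 0 < M ∧ 4 ∣ M ∧ 4 ∣ Y ∧
    ∀ c t : ℕ, 1 ≤ t → t ≤ m → ¬ IsSP (Y + c * M + t) := by
  induction m with
  | zero =>
      exact ⟨4, 4, by norm_num, dvd_rfl, dvd_rfl,
        fun c t h1 h2 => absurd (h1.trans h2) (by norm_num)⟩
  | succ m ih =>
      obtain ⟨Y, M, hM0, hM4, hY4, hslots⟩ := ih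
      obtain ⟨r, hrM, hr⟩ := Nat.exists_infinite_primes (M + 1)
      obtain ⟨s, hsr, hs⟩ := Nat.exists_infinite_primes (max M r + 1)
      have hrs : r ≠ s := by
        have := le_max_right M r; omega
      have hMr : Nat.Coprime M r := by
        refine ((hr.coprime_iff_not_dvd).mpr ?_).symm
        intro hdvd
        have := Nat.le_of_dvd hM0 hdvd; omega
      have hMs : Nat.Coprime M s := by
        refine ((hs.coprime_iff_not_dvd).mpr ?_).symm
        intro hdvd
        have h1 := Nat.le_of_dvd hM0 hdvd
        have := le_max_left M r; omega
      set R := r ^ 2 * s ^ 2 with hR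
      have hco_rs : Nat.Coprime (r ^ 2) (s ^ 2) :=
        ((Nat.coprime_primes hr hs).mpr hrs).pow 2 2
      have hcop : Nat.Coprime M R :=
        Nat.Coprime.mul_right (hMr.pow_right 2) (hMs.pow_right 2)
      have hr2 : 2 ≤ r := hr.two_le
      have hs2 : 2 ≤ s := hs.two_le
      have hR1 : 1 < R := by
        have : 2 * 2 ≤ r ^ 2 := by nlinarith
        have : 2 * 2 ≤ s ^ 2 := by nlinarith
        calc 1 < 4 * 4 := by norm_num
        _ ≤ R := by rw [hR]; nlinarith
      obtain ⟨u, -, hu⟩ := Nat.exists_mul_mod_eq_one_of_coprime hcop hR1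
      have hu' : M * u ≡ 1 [MOD R] := by
        unfold Nat.ModEq
        rw [hu, Nat.mod_eq_of_lt hR1]
      obtain ⟨w, hw1, hw2⟩ := Nat.chineseRemainder hco_rs r s
      -- choose the shift c₀
      set t₀ := m + 1 with ht₀
      have hZle : Y + t₀ ≤ R * (Y + t₀) := Nat.le_mul_of_pos_left _ (by omega)
      set D := w + R * (Y + t₀) - (Y + t₀) with hD
      set c₀ := D * u with hc₀
      have hA : Y + c₀ * M + t₀ ≡ w [MOD R] := by
        have h1 : c₀ * M ≡ D [MOD R] := by
          have : c₀ * M = D * (M * u) := by ring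
          rw [this]
          calc D * (M * u) ≡ D * 1 [MOD R] := Nat.ModEq.mul_left D hu'
          _ = D := by ring
        have h2 : Y + c₀ * M + t₀ ≡ Y + D + t₀ [MOD R] :=
          Nat.ModEq.add (Nat.ModEq.add_left Y h1) (Nat.ModEq.refl t₀)
        have h3 : Y + D + t₀ = w + R * (Y + t₀) := by omega
        have h4 : w + R * (Y + t₀) ≡ w + 0 [MOD R] :=
          Nat.ModEq.add_left w ((Nat.modEq_zero_iff_dvd).mpr ⟨Y + t₀, rfl⟩)
        calc Y + c₀ * M + t₀ ≡ Y + D + t₀ [MOD R] := h2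
        _ = w + R * (Y + t₀) := h3
        _ ≡ w + 0 [MOD R] := h4
        _ = w := by ring
      refine ⟨Y + c₀ * M, M * R, by positivity, Dvd.dvd.mul_right hM4 R,
        (Nat.dvd_add_right hY4).mpr (hM4.mul_left c₀), ?_⟩
      intro c t h1 h2
      rcases (by omega : t ≤ m ∨ t = m + 1) with h | h
      · have heq : Y + c₀ * M + c * (M * R) + t = Y + (c₀ + c * R) * M + t := by ring
        rw [heq]
        exact hslots (c₀ + c * R) t h1 (by omega)
      · subst h
        set X := Y + c₀ * M + c * (M * R) + t₀ with hX
        have hXw : X ≡ w [MOD R] := by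
          have h0 : c * (M * R) ≡ 0 [MOD R] :=
            (Nat.modEq_zero_iff_dvd).mpr ⟨c * M, by ring⟩
          have : X = (Y + c₀ * M + t₀) + c * (M * R) := by rw [hX]; ring
          rw [this]
          calc (Y + c₀ * M + t₀) + c * (M * R) ≡ w + 0 [MOD R] := Nat.ModEq.add hA h0
          _ = w := by ring
        have hXr : X ≡ r [MOD r ^ 2] :=
          ((hXw.of_dvd ⟨s ^ 2, rfl⟩).trans hw1)
        have hXs : X ≡ s [MOD s ^ 2] :=
          ((hXw.of_dvd ⟨r ^ 2, mul_comm _ _⟩).trans hw2)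
        have hdiv : ∀ q : ℕ, 2 ≤ q → X ≡ q [MOD q ^ 2] → q ∣ X ∧ ¬ q ^ 2 ∣ X := by
          intro q hq hmod
          constructor
          · have h1 : X ≡ q [MOD q] := hmod.of_dvd (dvd_pow_self q two_ne_zero)
            have h2 : q ≡ 0 [MOD q] := (Nat.modEq_zero_iff_dvd).mpr dvd_rfl
            exact (Nat.modEq_zero_iff_dvd).mp (h1.trans h2)
          · intro hdvd
            have h1 : X ≡ 0 [MOD q ^ 2] := (Nat.modEq_zero_iff_dvd).mpr hdvd
            have h2 : q ≡ 0 [MOD q ^ 2] := (hmod.symm.trans h1)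
            have h3 : q ^ 2 ∣ q := (Nat.modEq_zero_iff_dvd).mp h2
            have h4 := Nat.le_of_dvd (by omega) h3
            nlinarith [h4, sq_nonneg q]
        obtain ⟨hrX, hr2X⟩ := hdiv r hr2 hXr
        obtain ⟨hsX, hs2X⟩ := hdiv s hs2 hXs
        exact not_isSP_of_pair hr hs hrs hrX hr2X hsX hs2X

theorem equal_dot_chain (n : ℕ) (hn : 2 ≤ n) :
    ∃ f : ℕ → ℕ,
      (∀ j, 1 ≤ j → j ≤ n → f j ∈ Qset) ∧
      (∀ j j', 1 ≤ j → j ≤ n → 1 ≤ j' → j' ≤ n → f j = f j' → j = j') ∧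
      ∃ l ∈ Qset, ∀ j, 1 ≤ j → j ≤ n - 1 → dot (f j) (f (j + 1)) = l := by
  obtain ⟨Y₀, M, hM0, hM4, hY04, hslots⟩ := key_crt (4 * n)
  obtain ⟨M', hM'⟩ := hM4
  set Y := Y₀ + 2 * M with hYdef
  have hY4 : 4 ∣ Y := by
    exact dvd_add hY04 ⟨2 * M', by omega⟩
  obtain ⟨K, hK⟩ := hY4
  have hY8 : 8 ≤ Y := by omega
  have hK2 : 2 ≤ K := by omega
  -- the non-SP property of the window (Y, Y + 4n]
  have hwin : ∀ t : ℕ, 1 ≤ t → t ≤ 4 * n → (Y + t) ∉ Qset := by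
    intro t h1 h2 hmem
    rcases hmem with h | h
    · omega
    · exact hslots 2 t h1 h2 (by rw [show Y₀ + 2 * M + t = Y + t by rw [hYdef]]; exact h)
  -- N is constant on the window
  have hNwin : ∀ t : ℕ, 1 ≤ t → t ≤ 4 * n → N (Y + t) = N Y := by
    intro t h1 h2
    unfold N
    congr 1
    ext y
    simp only [Set.mem_setOf_eq]
    constructor
    · rintro ⟨hy, hlt⟩
      exact ⟨hy, by omega⟩
    · rintro ⟨hy, hlt⟩
      refine ⟨hy, ?_⟩
      by_contra hle
      push_neg at hle
      have ht' : y = Y + (y - Y) := by omega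
      exact hwin (y - Y) (by omega) (by omega) (ht' ▸ hy)
  refine ⟨fun j => 2 * (K + j - 1) ^ 2, ?_, ?_, N Y, (N_spec Y).1, ?_⟩
  · intro j hj1 hjn
    exact two_mul_sq_mem_Qset (by omega)
  · intro j j' hj1 hjn hj'1 hj'n heq
    simp only at heq
    have h2 : (K + j - 1) ^ 2 = (K + j' - 1) ^ 2 := by omega
    have := Nat.pow_left_injective (two_ne_zero) h2
    omega
  · intro j hj1 hjn
    have hj' : K + (j + 1) - 1 = (K + j - 1) + 1 := by omega
    set a := K + j - 1 with ha
    have ha2 : 2 ≤ a := by omega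
    show N ((((2 * (K + j - 1) ^ 2 : ℕ)) : ℤ) - ((2 * (K + (j + 1) - 1) ^ 2 : ℕ) : ℤ)).natAbs = N Y
    rw [hj']
    have hcast : (((2 * a ^ 2 : ℕ)) : ℤ) - ((2 * (a + 1) ^ 2 : ℕ) : ℤ) = -((4 * a + 2 : ℕ) : ℤ) := by
      push_cast; ring
    rw [hcast, Int.natAbs_neg, Int.natAbs_natCast]
    have h4a : 4 * a + 2 = Y + (4 * j - 2) := by omega
    rw [h4a]
    exact hNwin (4 * j - 2) (by omega) (by omega)
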